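/- For 1 ≤ k ≤ N−1 the following operator identity holds on F[z_1,…,z_N]: B⁺_{k,{1,…,N}} = Σ_{ℓ=0}^{k} Σ_{J ⊆ {k+2,…,N}, |J| = ℓ} z_J · B⁺_{k−ℓ,{1,…,k+1}} · D_{k−ℓ+1,J}, with the conventions B⁺_{0,J} = 1, z_∅ = 1 and D_{k+1,∅} = 1. -/

import Mathlib

open MvPolynomial Finset

section CSDefs

variable {F : Type*} [Field F] [CharZero F]

/-- Exact division in a polynomial ring: `divExact d f = f / d` when `d ∣ f`, junk otherwise. -/
noncomputable def divExact {σ : Type*} (d f : MvPolynomial σ F) : MvPolynomial σ F := by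
  classical exact if h : ∃ c, f = d * c then h.choose else 0

/-- The exchange operator `K_{ij}` permuting the variables `z_i` and `z_j`. -/
noncomputable def Kswap {N : ℕ} (i j : Fin N) (f : MvPolynomial (Fin N) F) :
    MvPolynomial (Fin N) F :=
  rename (Equiv.swap i j) f

/-- The Dunkl operator `∇_i = ∂_i + β ∑_{j ≠ i} (z_i - z_j)⁻¹ (1 - K_{ij})`. -/
noncomputable def nabla {N : ℕ} (β : F) (i : Fin N) (f : MvPolynomial (Fin N) F) :
    MvPolynomial (Fin N) F :=
  pderiv i f + β • ∑ j ∈ Finset.univ.erase i, divExact (X i - X j) (f - Kswap i j f)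

/-- `D_i = z_i ∇_i`. -/
noncomputable def Dop {N : ℕ} (β : F) (i : Fin N) (f : MvPolynomial (Fin N) F) :
    MvPolynomial (Fin N) F :=
  X i * nabla β i f

/-- `(D_{j₁} + kβ)(D_{j₂} + (k+1)β) ⋯` applied along a list of indices. -/
noncomputable def Dlist {N : ℕ} (β : F) :
    ℕ → List (Fin N) → MvPolynomial (Fin N) F → MvPolynomial (Fin N) F
  | _, [], f => f
  | k, j :: rest, f => Dop β j (Dlist β (k + 1) rest f) + ((k : F) * β) • Dlist β (k + 1) rest f

/-- `D_{k,J} = (D_{j₁} + kβ)(D_{j₂} + (k+1)β) ⋯ (D_{j_ℓ} + (k+ℓ-1)β)` for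
`J = {j₁ < j₂ < … < j_ℓ}`. -/
noncomputable def DJ {N : ℕ} (β : F) (k : ℕ) (J : Finset (Fin N))
    (f : MvPolynomial (Fin N) F) : MvPolynomial (Fin N) F :=
  Dlist β k (J.sort (· ≤ ·)) f

/-- `z_J = ∏_{i ∈ J} z_i`. -/
noncomputable def zJ {N : ℕ} (J : Finset (Fin N)) : MvPolynomial (Fin N) F := ∏ i ∈ J, X i

/-- The creation operator `B⁺_{i,J} = ∑_{J' ⊆ J, |J'| = i} z_{J'} D_{1,J'}`. -/
noncomputable def Bplus {N : ℕ} (β : F) (i : ℕ) (J : Finset (Fin N))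
    (f : MvPolynomial (Fin N) F) : MvPolynomial (Fin N) F :=
  ∑ J' ∈ J.powersetCard i, zJ J' * DJ β 1 J' f

/-- `A_{ij} = ((z_i+z_j)/(z_i-z_j))(z_i ∂_i - z_j ∂_j)`. -/
noncomputable def Aop {N : ℕ} (i j : Fin N) (f : MvPolynomial (Fin N) F) :
    MvPolynomial (Fin N) F :=
  divExact (X i - X j) ((X i + X j) * (X i * pderiv i f - X j * pderiv j f))

/-- `H^{(S)} = ∑_{i ∈ S} (z_i ∂_i)² + β ∑_{i<j, i,j ∈ S} A_{ij}`. -/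
noncomputable def Hop {N : ℕ} (β : F) (S : Finset (Fin N)) (f : MvPolynomial (Fin N) F) :
    MvPolynomial (Fin N) F :=
  ∑ i ∈ S, X i * pderiv i (X i * pderiv i f)
    + β • ∑ i ∈ S, ∑ j ∈ S.filter (fun j => i < j), Aop i j f

/-- A polynomial is symmetric in the variables indexed by `S`. -/
def SymmOn {N : ℕ} (S : Finset (Fin N)) (f : MvPolynomial (Fin N) F) : Prop :=
  ∀ i ∈ S, ∀ j ∈ S, rename (Equiv.swap i j) f = f

/-- `phiCS β N lam i = (B⁺_i)^{λ_i - λ_{i+1}} ⋯ (B⁺_1)^{λ_1 - λ_2} · 1`,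
where `lam` is 0-indexed: `lam (j-1) = λ_j`. -/
noncomputable def phiCS (β : F) (N : ℕ) (lam : ℕ → ℕ) : ℕ → MvPolynomial (Fin N) F
  | 0 => 1
  | i + 1 => (fun f => Bplus β (i + 1) Finset.univ f)^[lam i - lam (i + 1)] (phiCS β N lam i)

/-- The monomial symmetric polynomial attached to an exponent vector. -/
noncomputable def msym (N : ℕ) (lam : Fin N → ℕ) : MvPolynomial (Fin N) F := by
  classical
  exact ∑ v ∈ (Finset.univ : Finset (Equiv.Perm (Fin N))).image
      (fun σ => fun i => lam (σ i)), ∏ i, X i ^ v i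

/-- `𝐷̂_i = D_i + β(i-1) - β ∑_{j<i} (1 - K_{ij})` (0-indexed: `i-1` becomes `i`). -/
noncomputable def Dhat {N : ℕ} (β : F) (i : Fin N) (f : MvPolynomial (Fin N) F) :
    MvPolynomial (Fin N) F :=
  Dop β i f + (β * ((i : ℕ) : F)) • f
    - β • ∑ j ∈ Finset.univ.filter (fun j => j < i), (f - Kswap i j f)

end CSDefs


section Aux

variable {F : Type*} [Field F] [CharZero F]

lemma Dlist_append {N : ℕ} (β : F) (k : ℕ) (L1 L2 : List (Fin N))
    (f : MvPolynomial (Fin N) F) :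
    Dlist β k (L1 ++ L2) f = Dlist β k L1 (Dlist β (k + L1.length) L2 f) := by
  induction L1 generalizing k with
  | nil => simp [Dlist]
  | cons a L1 ih =>
    simp only [List.cons_append, Dlist, List.length_cons]
    rw [ih (k + 1),
      show k + 1 + L1.length = k + (L1.length + 1) from by omega]

lemma sort_union_of_lt {N : ℕ} (s t : Finset (Fin N))
    (h : ∀ a ∈ s, ∀ b ∈ t, a < b) :
    (s ∪ t).sort (· ≤ ·) = s.sort (· ≤ ·) ++ t.sort (· ≤ ·) := by
  have hdisj : Disjoint s t := by
    rw [Finset.disjoint_left]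
    intro a ha hat
    exact absurd rfl (h a ha a hat).ne
  have hperm : List.Perm ((s ∪ t).sort (· ≤ ·)) (s.sort (· ≤ ·) ++ t.sort (· ≤ ·)) := by
    rw [← Multiset.coe_eq_coe]
    show ((s ∪ t).sort (· ≤ ·) : Multiset (Fin N))
        = (↑(s.sort (· ≤ ·)) + ↑(t.sort (· ≤ ·)) : Multiset (Fin N))
    rw [Finset.sort_eq, Finset.sort_eq, Finset.sort_eq,
      ← Finset.disjUnion_eq_union s t hdisj]
    rfl
  refine List.Perm.eq_of_pairwise' (Finset.pairwise_sort _ _) ?_ hperm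
  rw [List.pairwise_append]
  refine ⟨Finset.pairwise_sort _ _, Finset.pairwise_sort _ _, fun a ha b hb => ?_⟩
  have ha' : a ∈ s := (Finset.mem_sort (α := Fin N) (· ≤ ·)).mp ha
  have hb' : b ∈ t := (Finset.mem_sort (α := Fin N) (· ≤ ·)).mp hb
  exact (h a ha' b hb').le

end Aux

/-- the decomposition
`B⁺_k = ∑_{ℓ=0}^k ∑_{J ⊆ {k+2,…,N}, |J|=ℓ} z_J B⁺_{k-ℓ,{1,…,k+1}} D_{k-ℓ+1,J}`.
(0-indexed: `{1,…,k+1}` is `{x | x ≤ k}` and `{k+2,…,N}` is `{x | k+1 ≤ x}`.) -/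
theorem statement_9 {F : Type*} [Field F] [CharZero F] {N : ℕ} (β : F) (k : ℕ)
    (hk1 : 1 ≤ k) (hkN : k ≤ N - 1) (f : MvPolynomial (Fin N) F) :
    Bplus β k Finset.univ f
      = ∑ l ∈ Finset.range (k + 1),
          ∑ J ∈ (Finset.univ.filter (fun x : Fin N => k + 1 ≤ (x : ℕ))).powersetCard l,
            zJ J * Bplus β (k - l) (Finset.univ.filter (fun x : Fin N => (x : ℕ) ≤ k))
              (DJ β (k - l + 1) J f) := by
  classical
  set lower := Finset.univ.filter (fun x : Fin N => (x : ℕ) ≤ k) with hlow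
  set upper := Finset.univ.filter (fun x : Fin N => k + 1 ≤ (x : ℕ)) with hup
  have hlu : ∀ a ∈ lower, ∀ b ∈ upper, a < b := by
    intro a ha b hb
    simp only [hlow, hup, Finset.mem_filter] at ha hb
    have : (a : ℕ) < (b : ℕ) := by omega
    exact Fin.lt_def.mpr this
  -- rewrite RHS
  simp only [Bplus, Finset.mul_sum]
  rw [Finset.sum_sigma', Finset.sum_sigma']
  refine (Finset.sum_bij' (i := fun (p : Σ _ : Σ _ : ℕ, Finset (Fin N), Finset (Fin N)) _ => p.1.2 ∪ p.2)
    (j := fun J' _ => ⟨⟨(J' ∩ upper).card, J' ∩ upper⟩, J' ∩ lower⟩)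
    ?_ ?_ ?_ ?_ ?_).symm
  · rintro ⟨⟨l, J⟩, J2⟩ hmem
    simp only [Finset.mem_sigma, Finset.mem_range, Finset.mem_powersetCard] at hmem
    obtain ⟨⟨hl, hJ, hJc⟩, hJ2, hJ2c⟩ := hmem
    rw [Finset.mem_powersetCard]
    constructor
    · exact Finset.subset_univ _
    · have hdisj : Disjoint J J2 := by
        rw [Finset.disjoint_left]
        intro a haJ haJ2
        exact absurd rfl (hlu a (hJ2 haJ2) a (hJ haJ)).ne'
      rw [Finset.card_union_of_disjoint hdisj, hJc, hJ2c]
      omega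
  · rintro J' hmem
    rw [Finset.mem_powersetCard] at hmem
    obtain ⟨-, hcard⟩ := hmem
    have hsplit : J' ∩ upper ∪ J' ∩ lower = J' := by
      rw [← Finset.inter_union_distrib_left]
      have : upper ∪ lower = Finset.univ := by
        ext x
        simp only [hlow, hup, Finset.mem_union, Finset.mem_filter, Finset.mem_univ,
          true_and, iff_true]
        omega
      rw [this, Finset.inter_univ]
    have hdisj : Disjoint (J' ∩ upper) (J' ∩ lower) := by
      rw [Finset.disjoint_left]
      intro a ha hb
      simp only [hlow, hup, Finset.mem_inter, Finset.mem_filter] at ha hb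
      omega
    have hcards : (J' ∩ upper).card + (J' ∩ lower).card = k := by
      have h3 := Finset.card_union_of_disjoint hdisj
      rw [hsplit] at h3
      omega
    simp only [Finset.mem_sigma, Finset.mem_range, Finset.mem_powersetCard]
    exact ⟨⟨by omega, Finset.inter_subset_right, by trivial⟩, Finset.inter_subset_right, by omega⟩
  · rintro ⟨⟨l, J⟩, J2⟩ hmem
    simp only [Finset.mem_sigma, Finset.mem_range, Finset.mem_powersetCard] at hmem
    obtain ⟨⟨hl, hJ, hJc⟩, hJ2, hJ2c⟩ := hmem
    have h1 : (J ∪ J2) ∩ upper = J := by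
      ext x
      simp only [Finset.mem_inter, Finset.mem_union]
      constructor
      · rintro ⟨hx | hx, hxu⟩
        · exact hx
        · exfalso
          have := hlu x (hJ2 hx) x hxu
          exact absurd rfl this.ne
      · intro hx
        exact ⟨Or.inl hx, hJ hx⟩
    have h2 : (J ∪ J2) ∩ lower = J2 := by
      ext x
      simp only [Finset.mem_inter, Finset.mem_union]
      constructor
      · rintro ⟨hx | hx, hxl⟩
        · exfalso
          have := hlu x hxl x (hJ hx)
          exact absurd rfl this.ne
        · exact hx
      · intro hx
        exact ⟨Or.inr hx, hJ2 hx⟩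
    simp only [h1, h2, hJc]
  · rintro J' hmem
    rw [Finset.mem_powersetCard] at hmem
    have hsplit : J' ∩ upper ∪ J' ∩ lower = J' := by
      rw [← Finset.inter_union_distrib_left]
      have : upper ∪ lower = Finset.univ := by
        ext x
        simp only [hlow, hup, Finset.mem_union, Finset.mem_filter, Finset.mem_univ,
          true_and, iff_true]
        omega
      rw [this, Finset.inter_univ]
    exact hsplit
  · rintro ⟨⟨l, J⟩, J2⟩ hmem
    simp only [Finset.mem_sigma, Finset.mem_range, Finset.mem_powersetCard] at hmem
    obtain ⟨⟨hl, hJ, hJc⟩, hJ2, hJ2c⟩ := hmem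
    have hJ2J : ∀ a ∈ J2, ∀ b ∈ J, a < b := fun a ha b hb => hlu a (hJ2 ha) b (hJ hb)
    have hdisj : Disjoint J2 J := by
      rw [Finset.disjoint_left]
      intro a ha hb
      exact absurd rfl (hJ2J a ha a hb).ne
    have hunion : J ∪ J2 = J2 ∪ J := Finset.union_comm _ _
    have hz : (zJ (J ∪ J2) : MvPolynomial (Fin N) F) = zJ J * zJ J2 := by
      rw [hunion, zJ, Finset.prod_union hdisj, zJ, zJ, mul_comm]
    have hD : DJ β 1 (J ∪ J2) f = DJ β 1 J2 (DJ β (k - l + 1) J f) := by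
      have hlen : (J2.sort (· ≤ ·)).length = k - l := by
        rw [Finset.length_sort, hJ2c]
      simp only [DJ]
      rw [hunion, sort_union_of_lt J2 J hJ2J, Dlist_append, hlen,
        show 1 + (k - l) = k - l + 1 from by omega]
    rw [hz, hD]
    ring
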